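/- Let w₁,...,wₙ be distinct points of the upper half-plane with J(wᵢ) ∉ {0,1}, J'(wᵢ) ≠ 0, and J(wᵢ) ≠ J(wⱼ) for i ≠ j, and set f(τ) = η⁴(τ)/∏_{i=1}^n (J(τ)-J(wᵢ))². Then, assuming the identity 4η'/η - J''/J' = (1/6)(3J'/(1-J) - 4J'/J), the residue of f at wᵢ equals (hᵢ(wᵢ)/(6J'(wᵢ)))·(3/(1-J(wᵢ)) - 4/J(wᵢ) - ∑_{j≠i} 12/(J(wᵢ)-J(wⱼ))), where hᵢ(τ) = η⁴(τ)/∏_{j≠i}(J(τ)-J(wⱼ))². In particular, the residue of f at wᵢ vanishes if and only if 3/(1-J(wᵢ)) - 4/J(wᵢ) = ∑_{j≠i} 12/(J(wᵢ)-J(wⱼ)). -/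

import Mathlib

open Complex Filter Finset

private lemma analyticAt_dslope'' {f : ℂ → ℂ} {c : ℂ} (hf : AnalyticAt ℂ f c) :
    AnalyticAt ℂ (dslope f c) c := by
  obtain ⟨p, hp⟩ := hf
  exact ⟨p.fslope, hp.has_fpower_series_dslope_fslope⟩

private lemma deriv_deriv_eq'' {f : ℂ → ℂ} {c : ℂ} (hf : AnalyticAt ℂ f c) :
    deriv (deriv f) c = 2 * deriv (dslope f c) c := by
  obtain ⟨p, hp⟩ := hf
  have h1 : deriv (dslope f c) c = p.coeff 2 := by
    rw [hp.has_fpower_series_dslope_fslope.deriv]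
    exact p.coeff_fslope
  obtain ⟨r, hr⟩ := hp
  have h2 := hr.factorial_smul (1 : ℂ) 2
  have h3 : deriv (deriv f) c = iteratedDeriv 2 f c := by
    rw [iteratedDeriv_succ, iteratedDeriv_one]
  rw [h3, iteratedDeriv_eq_iteratedFDeriv, ← h2, h1]
  show (Nat.factorial 2) • p.coeff 2 = 2 * p.coeff 2
  rw [nsmul_eq_mul]
  norm_num [Nat.factorial]

theorem stmt_19 (Ω : Set ℂ) (hΩ : Ω = {z : ℂ | 0 < z.im})
    (η J : ℂ → ℂ) (hη : AnalyticOn ℂ η Ω) (hJ : AnalyticOn ℂ J Ω)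
    (hηne : ∀ τ ∈ Ω, η τ ≠ 0)
    (n : ℕ) (w : Fin n → ℂ) (hw : ∀ i, w i ∈ Ω)
    (hwdist : Function.Injective w)
    (hJ0 : ∀ i, J (w i) ≠ 0) (hJ1 : ∀ i, J (w i) ≠ 1)
    (hJ' : ∀ i, deriv J (w i) ≠ 0)
    (hJinj : ∀ i j, i ≠ j → J (w i) ≠ J (w j))
    -- the assumed logarithmic-derivative identity
    (hid : ∀ τ ∈ Ω,
      4 * deriv η τ / η τ - deriv (deriv J) τ / deriv J τ =
        1 / 6 * (3 * deriv J τ / (1 - J τ) - 4 * deriv J τ / J τ))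
    (f : ℂ → ℂ)
    (hfdef : ∀ τ, f τ = η τ ^ 4 / ∏ i, (J τ - J (w i)) ^ 2)
    (h : Fin n → ℂ → ℂ)
    (hhdef : ∀ i τ, h i τ = η τ ^ 4 / ∏ j ∈ univ.erase i, (J τ - J (w j)) ^ 2) :
    ∀ i : Fin n,
      (∃ g : ℂ → ℂ, AnalyticAt ℂ g (w i) ∧
        ∀ᶠ z in nhdsWithin (w i) {w i}ᶜ,
          f z =
            (h i (w i) / (deriv J (w i)) ^ 2) / (z - w i) ^ 2 +
            (h i (w i) / (6 * deriv J (w i)) *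
              (3 / (1 - J (w i)) - 4 / J (w i)
                - ∑ j ∈ univ.erase i, 12 / (J (w i) - J (w j)))) / (z - w i)
            + g z) ∧
      (h i (w i) / (6 * deriv J (w i)) *
          (3 / (1 - J (w i)) - 4 / J (w i)
            - ∑ j ∈ univ.erase i, 12 / (J (w i) - J (w j))) = 0 ↔
        3 / (1 - J (w i)) - 4 / J (w i)
          = ∑ j ∈ univ.erase i, 12 / (J (w i) - J (w j))) := by
  have hΩo : IsOpen Ω := by
    rw [hΩ]; exact isOpen_lt continuous_const Complex.continuous_im
  have hηA : AnalyticOnNhd ℂ η Ω := hΩo.analyticOn_iff_analyticOnNhd.mp hη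
  have hJA : AnalyticOnNhd ℂ J Ω := hΩo.analyticOn_iff_analyticOnNhd.mp hJ
  intro i
  set c := w i with hcdef
  have hcΩ : c ∈ Ω := hw i
  have hJc : AnalyticAt ℂ J c := hJA c hcΩ
  have hηc : AnalyticAt ℂ η c := hηA c hcΩ
  have hEne : η c ≠ 0 := hηne c hcΩ
  set K := deriv J c with hKdef
  have hKne : K ≠ 0 := hJ' i
  set P : ℂ → ℂ := fun z => ∏ j ∈ univ.erase i, (J z - J (w j)) ^ 2 with hPdef
  have hfac : ∀ j ∈ univ.erase i, J c - J (w j) ≠ 0 := by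
    intro j hj
    refine sub_ne_zero.mpr (hJinj i j ?_)
    intro hij
    exact (Finset.mem_erase.mp hj).1 hij.symm
  have hPc : P c ≠ 0 := Finset.prod_ne_zero_iff.mpr fun j hj => pow_ne_zero 2 (hfac j hj)
  have hPA : AnalyticAt ℂ P c :=
    Finset.analyticAt_fun_prod _ fun j _ => (hJc.sub analyticAt_const).pow 2
  have hh : h i = fun τ => η τ ^ 4 / P τ := funext (hhdef i)
  have hhA : AnalyticAt ℂ (h i) c := by
    rw [hh]; exact (hηc.pow 4).div hPA hPc
  set φ := dslope J c with hφdef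
  have hφA : AnalyticAt ℂ φ c := analyticAt_dslope'' hJc
  have hφc : φ c = K := dslope_same J c
  have hφne : φ c ≠ 0 := by rw [hφc]; exact hKne
  set F : ℂ → ℂ := fun z => h i z / φ z ^ 2 with hFdef
  have hFA : AnalyticAt ℂ F c := hhA.div (hφA.pow 2) (pow_ne_zero 2 hφne)
  set G := dslope (dslope F c) c with hGdef
  have hGA : AnalyticAt ℂ G c := analyticAt_dslope'' (analyticAt_dslope'' hFA)
  -- expansion of F
  have eF : ∀ z, F z = F c + deriv F c * (z - c) + (z - c) ^ 2 * G z := by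
    intro z
    have e1 := sub_smul_dslope F c z
    have e2 := sub_smul_dslope (dslope F c) c z
    rw [smul_eq_mul] at e1 e2
    rw [dslope_same F c] at e2
    linear_combination -e1 - (z - c) * e2
  -- f in terms of F
  have hJw : ∀ z, J z - J c = (z - c) * φ z := by
    intro z
    have := sub_smul_dslope J c z
    rw [smul_eq_mul] at this
    exact this.symm
  have hfF : ∀ z, f z = F z / (z - c) ^ 2 := by
    intro z
    have hprod : ∏ j, (J z - J (w j)) ^ 2 = (J z - J c) ^ 2 * P z := by
      rw [hPdef]
      exact (Finset.mul_prod_erase univ _ (Finset.mem_univ i)).symm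
    rw [hfdef, hprod, hJw z]
    show _ = (h i z / φ z ^ 2) / (z - c) ^ 2
    rw [hhdef i z]
    show _ = ((η z ^ 4 / P z) / φ z ^ 2) / (z - c) ^ 2
    rw [div_div, div_div]
    congr 1
    ring
  -- derivatives
  have hJd : HasDerivAt J K c := hJc.differentiableAt.hasDerivAt
  have hηd : HasDerivAt η (deriv η c) c := hηc.differentiableAt.hasDerivAt
  set q := deriv φ c with hqdef
  have hφd : HasDerivAt φ q c := hφA.differentiableAt.hasDerivAt
  have hJ'' : deriv (deriv J) c = 2 * q := deriv_deriv_eq'' hJc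
  set S := ∑ j ∈ univ.erase i, 2 / (J c - J (w j)) with hSdef
  have h1 : ∀ j ∈ univ.erase i,
      HasDerivAt (fun z => (J z - J (w j)) ^ 2)
        ((fun j => 2 * (J c - J (w j)) * K) j) c := by
    intro j _
    have := (hJd.sub_const (J (w j))).pow 2
    refine this.congr_deriv ?_
    norm_num
  have h2 := HasDerivAt.fun_finsetProd h1
  have hsum : ∑ j ∈ univ.erase i,
      (∏ k ∈ (univ.erase i).erase j, (J c - J (w k)) ^ 2) • ((fun j => 2 * (J c - J (w j)) * K) j)
      = P c * (K * S) := by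
    rw [hSdef, Finset.mul_sum, Finset.mul_sum]
    refine Finset.sum_congr rfl fun j hj => ?_
    have hprodj : (∏ k ∈ (univ.erase i).erase j, (J c - J (w k)) ^ 2) * (J c - J (w j)) ^ 2
        = P c := Finset.prod_erase_mul _ _ hj
    have hd := hfac j hj
    rw [smul_eq_mul, ← hprodj]
    field_simp
  have hPd : HasDerivAt P (P c * (K * S)) c := hsum ▸ h2
  have hhd : HasDerivAt (h i)
      ((4 * η c ^ 3 * deriv η c * P c - η c ^ 4 * (P c * (K * S))) / P c ^ 2) c := by
    rw [hh]
    have hη4 : HasDerivAt (fun z => η z ^ 4) (4 * η c ^ 3 * deriv η c) c := by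
      have := hηd.pow 4
      refine this.congr_deriv ?_
      norm_num
    have := hη4.div hPd hPc
    exact this
  have hφ2 : HasDerivAt (fun z => φ z ^ 2) (2 * φ c * q) c := by
    have := hφd.pow 2
    refine this.congr_deriv ?_
    norm_num
  have hFd : HasDerivAt F
      (((4 * η c ^ 3 * deriv η c * P c - η c ^ 4 * (P c * (K * S))) / P c ^ 2 * φ c ^ 2
        - h i c * (2 * φ c * q)) / (φ c ^ 2) ^ 2) c :=
    hhd.div hφ2 (pow_ne_zero 2 hφne)
  -- residue value
  have hJcne : J c ≠ 0 := hJ0 i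
  have h1J : (1 : ℂ) - J c ≠ 0 := sub_ne_zero.mpr (Ne.symm (hJ1 i))
  have hT : ∑ j ∈ univ.erase i, 12 / (J c - J (w j)) = 6 * S := by
    rw [hSdef, Finset.mul_sum]
    refine Finset.sum_congr rfl fun j _ => ?_
    ring
  have hidc := hid c hcΩ
  rw [hJ''] at hidc
  have hhc : h i c = η c ^ 4 / P c := hhdef i c
  have hBmain : deriv F c
      = h i c / (6 * K) * (3 / (1 - J c) - 4 / J c - ∑ j ∈ univ.erase i, 12 / (J c - J (w j))) := by
    rw [hFd.deriv, hT, hφc, hhc]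
    have L1 : ((4 * η c ^ 3 * deriv η c * P c - η c ^ 4 * (P c * (K * S))) / P c ^ 2 * K ^ 2
          - η c ^ 4 / P c * (2 * K * q)) / (K ^ 2) ^ 2
        = (η c ^ 4 / P c) / K ^ 2 * ((4 * deriv η c / η c - 2 * q / K) - K * S) := by
      field_simp
      ring
    have L2 : (η c ^ 4 / P c) / K ^ 2 * ((1 / 6 * (3 * K / (1 - J c) - 4 * K / J c)) - K * S)
        = (η c ^ 4 / P c) / (6 * K) * (3 / (1 - J c) - 4 / J c - 6 * S) := by
      field_simp
    calc ((4 * η c ^ 3 * deriv η c * P c - η c ^ 4 * (P c * (K * S))) / P c ^ 2 * K ^ 2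
          - η c ^ 4 / P c * (2 * K * q)) / (K ^ 2) ^ 2
        = (η c ^ 4 / P c) / K ^ 2 * ((4 * deriv η c / η c - 2 * q / K) - K * S) := L1
      _ = (η c ^ 4 / P c) / K ^ 2 * ((1 / 6 * (3 * K / (1 - J c) - 4 * K / J c)) - K * S) := by
          rw [hidc]
      _ = (η c ^ 4 / P c) / (6 * K) * (3 / (1 - J c) - 4 / J c - 6 * S) := L2
  have hFcA : F c = h i c / K ^ 2 := by
    show h i c / φ c ^ 2 = h i c / K ^ 2
    rw [hφc]
  constructor
  · refine ⟨G, hGA, ?_⟩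
    filter_upwards [self_mem_nhdsWithin] with z hz
    have hzc : z - c ≠ 0 := sub_ne_zero.mpr hz
    have expand : ∀ (A B Gz u : ℂ), u ≠ 0 →
        (A + B * u + u ^ 2 * Gz) / u ^ 2 = A / u ^ 2 + B / u + Gz := by
      intro A B Gz u hu
      field_simp
    rw [hfF z, eF z, hFcA, hBmain]
    exact expand _ _ _ _ hzc
  · have hhicne : h i c ≠ 0 := by
      rw [hhc]; exact div_ne_zero (pow_ne_zero 4 hEne) hPc
    have hcoef : h i c / (6 * K) ≠ 0 :=
      div_ne_zero hhicne (mul_ne_zero (by norm_num) hKne)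
    constructor
    · intro h0
      rcases mul_eq_zero.mp h0 with h0' | h0'
      · exact absurd h0' hcoef
      · linear_combination h0'
    · intro he
      have : 3 / (1 - J c) - 4 / J c - ∑ j ∈ univ.erase i, 12 / (J c - J (w j)) = 0 := by
        linear_combination he
      rw [this, mul_zero]
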